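/- Let q be a real number with q > 1 and m ≥ 1 an integer. For 1 ≤ k ≤ m define a2_k = (1-q) · q^{-2k^2-k} / (q^{-2};q^{-2})_{k-1} · ( (q^{-2k};q^{-2})_{m-k} / (q^{-2};q^{-2})_{m-k} ) · q^{-m+k} and b2_k = q^{-2k^2+k} / (q^{-2};q^{-2})_{k-1} · ( (q^{-2k};q^{-2})_{m-k} / (q^{-2};q^{-2})_{m-k} ) · q^{-m+k}. Then Σ_{k=1}^{m} (a2_k + b2_k) = (q^{-m}/(1+q)) · Σ_{i=1}^{m} (-1)^{i-1} q^{-i(i+1)} (q^{2i+1} + 1) / (1/q^2; 1/q^2)_{m-i}. -/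

import Mathlib

noncomputable def qPoch (a Q : ℝ) (n : ℕ) : ℝ := ∏ j ∈ Finset.range n, (1 - a * Q ^ j)

lemma qPoch_zero (a Q : ℝ) : qPoch a Q 0 = 1 := by simp [qPoch]

lemma qPoch_succ (a Q : ℝ) (n : ℕ) : qPoch a Q (n+1) = qPoch a Q n * (1 - a * Q ^ n) :=
  Finset.prod_range_succ _ _

lemma qPoch_pos {x : ℝ} (hx0 : 0 < x) (hx1 : x < 1) (n : ℕ) : 0 < qPoch x x n := by
  refine Finset.prod_pos fun j _ => ?_
  have h1 : x * x ^ j ≤ x * 1 := by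
    have := pow_le_one₀ hx0.le hx1.le (n := j)
    nlinarith
  linarith

lemma qPoch_ne {x : ℝ} (hx0 : 0 < x) (hx1 : x < 1) (n : ℕ) : qPoch x x n ≠ 0 :=
  (qPoch_pos hx0 hx1 n).ne'

lemma one_sub_ne {x : ℝ} (hx0 : 0 < x) (hx1 : x < 1) (n : ℕ) : 1 - x * x ^ n ≠ 0 := by
  have h1 : x * x ^ n ≤ x * 1 := by
    have := pow_le_one₀ hx0.le hx1.le (n := n)
    nlinarith
  intro h; nlinarith

lemma durfee {x : ℝ} (hx0 : 0 < x) (hx1 : x < 1) : ∀ a c : ℕ,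
    ∑ j ∈ Finset.range (a+1),
      x ^ (j*j + j*c) / (qPoch x x j * qPoch x x (j+c) * qPoch x x (a-j))
    = 1 / (qPoch x x a * qPoch x x (a+c)) := by
  have hP := qPoch_ne hx0 hx1
  have hO := one_sub_ne hx0 hx1
  intro a
  induction a with
  | zero => intro c; simp [qPoch_zero]
  | succ a ih =>
    -- step1 is uniform in the "second-slot" index function g and exponent shift d:
    -- ∑_{j<a+2} x^(j*j+j*(d+1))/(Pj * P(g j) * P(a+1-j))
    --   = ∑_{j<a+1} x^(j*j+j*(d+1))/(Pj * P(g j) * P(a-j))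
    --     + x^(a+1) * ∑_{j<a+2} x^(j*j+j*d... we handle exponents concretely below.
    have step1 : ∀ (c' : ℕ) (e : ℕ → ℕ) (he : ∀ j, e j + j = j*j + j*c'),
        ∑ j ∈ Finset.range (a+2),
            x ^ (j*j + j*c') / (qPoch x x j * qPoch x x (j+c') * qPoch x x (a+1-j))
        = (∑ j ∈ Finset.range (a+1),
            x ^ (j*j + j*c') / (qPoch x x j * qPoch x x (j+c') * qPoch x x (a-j)))
          + x^(a+1) * ∑ j ∈ Finset.range (a+2),
            x ^ (e j) / (qPoch x x j * qPoch x x (j+c') * qPoch x x (a+1-j)) := by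
      intro c' e he
      rw [Finset.sum_range_succ, Finset.sum_range_succ
        (f := fun j => x ^ (e j) / (qPoch x x j * qPoch x x (j+c') * qPoch x x (a+1-j)))]
      have hlast : x ^ ((a+1)*(a+1) + (a+1)*c') = x^(a+1) * x ^ (e (a+1)) := by
        rw [← pow_add, Nat.add_comm (a+1) (e (a+1)), he (a+1)]
      have hterm : ∀ j ∈ Finset.range (a+1),
          x ^ (j*j + j*c') / (qPoch x x j * qPoch x x (j+c') * qPoch x x (a+1-j))
          = x ^ (j*j + j*c') / (qPoch x x j * qPoch x x (j+c') * qPoch x x (a-j))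
            + x^(a+1) * (x ^ (e j) / (qPoch x x j * qPoch x x (j+c') * qPoch x x (a+1-j))) := by
        intro j hj
        have hja : j ≤ a := Nat.lt_succ_iff.mp (Finset.mem_range.mp hj)
        have h1 : a + 1 - j = (a-j)+1 := by omega
        have hxa : x^(a+1) = x^j * x^(a-j) * x := by
          rw [show a+1 = j+(a-j)+1 by omega, pow_succ, pow_add]
        have hxj : x ^ (j*j + j*c') = x ^ (e j) * x^j := by
          rw [← pow_add, he j]
        have n1 := hP j; have n2 := hP (j+c'); have n3 := hP (a-j); have n4 := hO (a-j)
        rw [h1, qPoch_succ, hxa, hxj]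
        field_simp
        ring
      rw [Finset.sum_congr rfl hterm, Finset.sum_add_distrib, ← Finset.mul_sum]
      rw [hlast]
      ring
    intro c
    induction c with
    | zero =>
      have h1 := step1 0 (fun j => j*j - j) (fun j => by
        have h2 : j ≤ j*j := by nlinarith
        have := Nat.sub_add_cancel h2
        simpa using this)
      -- step2 : U = S + D(a,1)
      have step2 :
          ∑ j ∈ Finset.range (a+2),
              x ^ (j*j - j) / (qPoch x x j * qPoch x x (j+0) * qPoch x x (a+1-j))
          = (∑ j ∈ Finset.range (a+2),
              x ^ (j*j + j*0) / (qPoch x x j * qPoch x x (j+0) * qPoch x x (a+1-j)))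
            + ∑ i ∈ Finset.range (a+1),
              x ^ (i*i + i*1) / (qPoch x x i * qPoch x x (i+1) * qPoch x x (a-i)) := by
        rw [← sub_eq_iff_eq_add']
        rw [← Finset.sum_sub_distrib]
        rw [Finset.sum_range_succ' (f := fun j =>
          x ^ (j*j - j) / (qPoch x x j * qPoch x x (j+0) * qPoch x x (a+1-j))
          - x ^ (j*j + j*0) / (qPoch x x j * qPoch x x (j+0) * qPoch x x (a+1-j)))]
        have h0 : x ^ (0*0 - 0) / (qPoch x x 0 * qPoch x x (0+0) * qPoch x x (a+1-0))
            - x ^ (0*0 + 0*0) / (qPoch x x 0 * qPoch x x (0+0) * qPoch x x (a+1-0)) = 0 := by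
          norm_num
        rw [h0, add_zero]
        refine Finset.sum_congr rfl fun i _ => ?_
        have he1 : (i+1)*(i+1) - (i+1) = i*i + i := by
          have h : (i+1)*(i+1) = (i*i+i) + (i+1) := by ring
          rw [h, Nat.add_sub_cancel]
        have he2 : (i+1)*(i+1) + (i+1)*0 = (i*i+i) + (i+1) := by ring
        have he3 : a + 1 - (i+1) = a - i := by omega
        have he4 : i*i + i*1 = i*i+i := by ring
        have he5 : (i+1) + 0 = i + 1 := by omega
        have n1 := hP i; have n2 := hP (a-i); have n3 := hO i
        have n3' : 1 - x ^ i * x ≠ 0 := by rw [mul_comm]; exact n3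
        rw [he1, he2, he3, he4, he5, qPoch_succ x x i, pow_add]
        field_simp
        ring
      rw [step2] at h1
      rw [ih 0, ih 1] at h1
      have hkey : (∑ j ∈ Finset.range (a+2),
          x ^ (j*j + j*0) / (qPoch x x j * qPoch x x (j+0) * qPoch x x (a+1-j)))
          * (1 - x * x^a)
          = 1/(qPoch x x a * qPoch x x (a+0))
            + x^(a+1) * (1/(qPoch x x a * qPoch x x (a+1))) := by
        have hpow : x^(a+1) = x * x^a := by rw [pow_succ]; ring
        rw [hpow] at h1 ⊢
        linear_combination h1
      rw [← eq_div_iff (hO a)] at hkey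
      rw [hkey]
      have ha0 : a + 0 = a := by omega
      have ha10 : a + 1 + 0 = a + 1 := by omega
      have n1 := hP a; have n2 := hO a
      have n2' : 1 - x ^ a * x ≠ 0 := by rw [mul_comm]; exact n2
      rw [ha0, ha10, qPoch_succ x x a, pow_succ]
      field_simp
      ring
    | succ c ihc =>
      have h1 := step1 (c+1) (fun j => j*j + j*c) (fun j => by ring)
      have step2 :
          ∑ j ∈ Finset.range (a+2),
              x ^ (j*j + j*c) / (qPoch x x j * qPoch x x (j+(c+1)) * qPoch x x (a+1-j))
          = (∑ j ∈ Finset.range (a+2),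
              x ^ (j*j + j*c) / (qPoch x x j * qPoch x x (j+c) * qPoch x x (a+1-j)))
            + x^(c+1) * ∑ j ∈ Finset.range (a+2),
              x ^ (j*j + j*(c+1)) / (qPoch x x j * qPoch x x (j+(c+1)) * qPoch x x (a+1-j)) := by
        rw [Finset.mul_sum, ← Finset.sum_add_distrib]
        refine Finset.sum_congr rfl fun j _ => ?_
        have hjc : j + (c+1) = (j+c)+1 := by omega
        have n1 := hP j; have n2 := hP (j+c); have n3 := hP (a+1-j); have n4 := hO (j+c)
        rw [hjc, qPoch_succ x x (j+c)]
        field_simp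
        ring
      rw [step2] at h1
      rw [ihc, ih (c+1)] at h1
      have hkey : (∑ j ∈ Finset.range (a+2),
          x ^ (j*j + j*(c+1)) / (qPoch x x j * qPoch x x (j+(c+1)) * qPoch x x (a+1-j)))
          * (1 - x * x^(a+c+1))
          = 1/(qPoch x x a * qPoch x x (a+(c+1)))
            + x^(a+1) * (1/(qPoch x x (a+1) * qPoch x x (a+1+c))) := by
        have hpow : x^(a+1) * x^(c+1) = x * x^(a+c+1) := by
          rw [← pow_add, ← pow_succ']; congr 1; omega
        linear_combination h1 + (∑ j ∈ Finset.range (a+2),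
          x ^ (j*j + j*(c+1)) / (qPoch x x j * qPoch x x (j+(c+1)) * qPoch x x (a+1-j))) * hpow
      rw [← eq_div_iff (hO (a+c+1))] at hkey
      rw [hkey]
      have e1 : a + 1 + c = a + c + 1 := by omega
      have e2 : a + (c+1) = a + c + 1 := by omega
      have e3 : a + 1 + (c+1) = (a+c+1) + 1 := by omega
      have n1 := hP a; have n2 := hP (a+c+1); have n3 := hO a; have n4 := hO (a+c+1)
      have n3' : 1 - x ^ a * x ≠ 0 := by rw [mul_comm]; exact n3
      have n4' : 1 - x ^ (a+c+1) * x ≠ 0 := by rw [mul_comm]; exact n4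
      rw [e1, e2, e3, qPoch_succ x x (a+c+1), qPoch_succ x x a, pow_succ]
      field_simp
      ring

/-- generalized "peel the last Pochhammer" lemma -/
lemma sum_peel {x : ℝ} (hx0 : 0 < x) (hx1 : x < 1) (a c' : ℕ) (e : ℕ → ℕ)
    (he : ∀ j, e j + j = j*j + j*c') (g : ℕ → ℕ) :
    ∑ j ∈ Finset.range (a+2),
        x ^ (j*j + j*c') / (qPoch x x j * qPoch x x (g j) * qPoch x x (a+1-j))
    = (∑ j ∈ Finset.range (a+1),
        x ^ (j*j + j*c') / (qPoch x x j * qPoch x x (g j) * qPoch x x (a-j)))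
      + x^(a+1) * ∑ j ∈ Finset.range (a+2),
        x ^ (e j) / (qPoch x x j * qPoch x x (g j) * qPoch x x (a+1-j)) := by
  have hP := qPoch_ne hx0 hx1
  have hO := one_sub_ne hx0 hx1
  rw [Finset.sum_range_succ, Finset.sum_range_succ
    (f := fun j => x ^ (e j) / (qPoch x x j * qPoch x x (g j) * qPoch x x (a+1-j)))]
  have hlast : x ^ ((a+1)*(a+1) + (a+1)*c') = x^(a+1) * x ^ (e (a+1)) := by
    rw [← pow_add, Nat.add_comm (a+1) (e (a+1)), he (a+1)]
  have hterm : ∀ j ∈ Finset.range (a+1),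
      x ^ (j*j + j*c') / (qPoch x x j * qPoch x x (g j) * qPoch x x (a+1-j))
      = x ^ (j*j + j*c') / (qPoch x x j * qPoch x x (g j) * qPoch x x (a-j))
        + x^(a+1) * (x ^ (e j) / (qPoch x x j * qPoch x x (g j) * qPoch x x (a+1-j))) := by
    intro j hj
    have hja : j ≤ a := Nat.lt_succ_iff.mp (Finset.mem_range.mp hj)
    have h1 : a + 1 - j = (a-j)+1 := by omega
    have hxa : x^(a+1) = x^j * x^(a-j) * x := by
      rw [show a+1 = j+(a-j)+1 by omega, pow_succ, pow_add]
    have hxj : x ^ (j*j + j*c') = x ^ (e j) * x^j := by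
      rw [← pow_add, he j]
    have n1 := hP j; have n2 := hP (g j); have n3 := hP (a-j); have n4 := hO (a-j)
    rw [h1, qPoch_succ, hxa, hxj]
    field_simp
    ring
  rw [Finset.sum_congr rfl hterm, Finset.sum_add_distrib, ← Finset.mul_sum]
  rw [hlast]
  ring

noncomputable def rr (y : ℝ) (n : ℕ) : ℝ :=
  ∑ j ∈ Finset.range (n+1), (-1:ℝ)^j * y^(j*(j+1)) / qPoch (y*y) (y*y) (n-j)

noncomputable def ss (y : ℝ) (n : ℕ) : ℝ :=
  ∑ j ∈ Finset.range (n+1), (-1:ℝ)^j * y^((j+1)*(j+2)) / qPoch (y*y) (y*y) (n-j)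

noncomputable def ll (y : ℝ) (n : ℕ) : ℝ :=
  ∑ j ∈ Finset.range (n+1),
    (y*y) ^ (j*j+j) / (qPoch (y*y) (y*y) j * qPoch (y*y) (y*y) j * qPoch (y*y) (y*y) (n-j))

noncomputable def ll2 (y : ℝ) (n : ℕ) : ℝ :=
  ∑ j ∈ Finset.range (n+1),
    (y*y) ^ (j*j+2*j) / (qPoch (y*y) (y*y) j * qPoch (y*y) (y*y) j * qPoch (y*y) (y*y) (n-j))

section recs

variable {y : ℝ} (hy0 : 0 < y) (hy1 : y < 1)

lemma hx0' (hy0 : 0 < y) : 0 < y*y := by nlinarith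
lemma hx1' (hy0 : 0 < y) (hy1 : y < 1) : y*y < 1 := by nlinarith

include hy0 hy1

lemma ll_rec (n : ℕ) :
    ll y (n+1) = ll y n + (y*y)^(n+1) *
      (1 / (qPoch (y*y) (y*y) (n+1) * qPoch (y*y) (y*y) (n+1))) := by
  set x := y*y with hxdef
  have hx0 : 0 < x := hx0' hy0
  have hx1 : x < 1 := hx1' hy0 hy1
  have h := sum_peel hx0 hx1 n 1 (fun j => j*j) (fun j => by ring) (fun j => j)
  have hd : ∑ j ∈ Finset.range (n+2),
      x ^ (j*j) / (qPoch x x j * qPoch x x j * qPoch x x (n+1-j))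
      = 1 / (qPoch x x (n+1) * qPoch x x (n+1)) := by
    have := durfee hx0 hx1 (n+1) 0
    rw [← this]
    refine Finset.sum_congr rfl fun j _ => ?_
    rw [show j*j + j*0 = j*j from by ring, show j+0 = j from by ring]
  have he1 : ∀ (S : Finset ℕ) (f : ℕ → ℕ), ∑ j ∈ S,
      x ^ (j*j+j*1) / (qPoch x x j * qPoch x x j * qPoch x x (f j))
      = ∑ j ∈ S, x ^ (j*j+j) / (qPoch x x j * qPoch x x j * qPoch x x (f j)) := by
    intro S f
    refine Finset.sum_congr rfl fun j _ => ?_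
    rw [show j*j + j*1 = j*j+j from by ring]
  rw [he1 _ (fun j => n+1-j), he1 _ (fun j => n-j), hd] at h
  exact h

lemma ll2_rec (n : ℕ) :
    ll2 y (n+1) = ll2 y n + (y*y)^(n+1) * ll y (n+1) := by
  set x := y*y with hxdef
  have hx0 : 0 < x := hx0' hy0
  have hx1 : x < 1 := hx1' hy0 hy1
  have h := sum_peel hx0 hx1 n 2 (fun j => j*j+j) (fun j => by ring) (fun j => j)
  have he1 : ∀ (S : Finset ℕ) (f : ℕ → ℕ), ∑ j ∈ S,
      x ^ (j*j+j*2) / (qPoch x x j * qPoch x x j * qPoch x x (f j))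
      = ∑ j ∈ S, x ^ (j*j+2*j) / (qPoch x x j * qPoch x x j * qPoch x x (f j)) := by
    intro S f
    refine Finset.sum_congr rfl fun j _ => ?_
    rw [show j*j + j*2 = j*j+2*j from by ring]
  rw [he1 _ (fun j => n+1-j), he1 _ (fun j => n-j)] at h
  exact h

end recs

section recs2

variable {y : ℝ} (hy0 : 0 < y) (hy1 : y < 1)
include hy0 hy1

lemma rr_rec (n : ℕ) :
    rr y (n+1) = rr y n + (y*y)^(n+1) * (1 / qPoch (y*y) (y*y) (n+1))
      - (y*y)^(n+1) * rr y n := by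
  set x := y*y with hxdef
  have hx0 : 0 < x := hx0' hy0
  have hx1 : x < 1 := hx1' hy0 hy1
  have hP := qPoch_ne hx0 hx1
  have hO := one_sub_ne hx0 hx1
  have step1 : rr y (n+1) = rr y n
      + ∑ j ∈ Finset.range (n+2), (-1:ℝ)^j * y^(j*(j+1)) * x^(n+1-j) / qPoch x x (n+1-j) := by
    show (∑ j ∈ Finset.range (n+2), (-1:ℝ)^j * y^(j*(j+1)) / qPoch x x (n+1-j)) = _
    rw [Finset.sum_range_succ, Finset.sum_range_succ
      (f := fun j => (-1:ℝ)^j * y^(j*(j+1)) * x^(n+1-j) / qPoch x x (n+1-j))]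
    have hterm : ∀ j ∈ Finset.range (n+1),
        (-1:ℝ)^j * y^(j*(j+1)) / qPoch x x (n+1-j)
        = (-1:ℝ)^j * y^(j*(j+1)) / qPoch x x (n-j)
          + (-1:ℝ)^j * y^(j*(j+1)) * x^(n+1-j) / qPoch x x (n+1-j) := by
      intro j hj
      have hjn : j ≤ n := Nat.lt_succ_iff.mp (Finset.mem_range.mp hj)
      have h1 : n + 1 - j = (n-j)+1 := by omega
      have n1 := hP (n-j); have n2 := hO (n-j)
      rw [h1, qPoch_succ, pow_succ]
      field_simp
      ring
    rw [Finset.sum_congr rfl hterm, Finset.sum_add_distrib]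
    show _ + _ + _ = (rr y n) + _
    rw [show rr y n = ∑ j ∈ Finset.range (n+1), (-1:ℝ)^j * y^(j*(j+1)) / qPoch x x (n-j) from rfl]
    have hl : n + 1 - (n+1) = 0 := by omega
    rw [hl]
    simp [qPoch_zero]
    ring
  have step2 : ∑ j ∈ Finset.range (n+2), (-1:ℝ)^j * y^(j*(j+1)) * x^(n+1-j) / qPoch x x (n+1-j)
      = x^(n+1) * (1 / qPoch x x (n+1)) - x^(n+1) * rr y n := by
    rw [Finset.sum_range_succ']
    have hterm : ∀ i ∈ Finset.range (n+1),
        (-1:ℝ)^(i+1) * y^((i+1)*(i+1+1)) * x^(n+1-(i+1)) / qPoch x x (n+1-(i+1))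
        = -(x^(n+1)) * ((-1:ℝ)^i * y^(i*(i+1)) / qPoch x x (n-i)) := by
      intro i hi
      have hin : i ≤ n := Nat.lt_succ_iff.mp (Finset.mem_range.mp hi)
      have h1 : n + 1 - (i+1) = n - i := by omega
      have hyx : y^((i+1)*(i+1+1)) = y^(i*(i+1)) * x^(i+1) := by
        rw [hxdef, ← pow_two, ← pow_mul, ← pow_add]
        congr 1; ring
      have hxx : x^(i+1) * x^(n-i) = x^(n+1) := by
        rw [← pow_add]; congr 1; omega
      rw [h1, hyx, ← hxx]
      have n1 := hP (n-i)
      field_simp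
      ring
    rw [Finset.sum_congr rfl hterm, ← Finset.mul_sum]
    rw [show (∑ i ∈ Finset.range (n+1), (-1:ℝ)^i * y^(i*(i+1)) / qPoch x x (n-i)) = rr y n from rfl]
    norm_num
    ring
  rw [step1, step2]
  ring

lemma ss_rec (n : ℕ) :
    ss y (n+1) = ss y n + (y*y)^(n+2) * (1 / qPoch (y*y) (y*y) (n+1))
      - (y*y)^(n+2) * ss y n := by
  set x := y*y with hxdef
  have hx0 : 0 < x := hx0' hy0
  have hx1 : x < 1 := hx1' hy0 hy1
  have hP := qPoch_ne hx0 hx1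
  have hO := one_sub_ne hx0 hx1
  have step1 : ss y (n+1) = ss y n
      + ∑ j ∈ Finset.range (n+2), (-1:ℝ)^j * y^((j+1)*(j+2)) * x^(n+1-j) / qPoch x x (n+1-j) := by
    show (∑ j ∈ Finset.range (n+2), (-1:ℝ)^j * y^((j+1)*(j+2)) / qPoch x x (n+1-j)) = _
    rw [Finset.sum_range_succ, Finset.sum_range_succ
      (f := fun j => (-1:ℝ)^j * y^((j+1)*(j+2)) * x^(n+1-j) / qPoch x x (n+1-j))]
    have hterm : ∀ j ∈ Finset.range (n+1),
        (-1:ℝ)^j * y^((j+1)*(j+2)) / qPoch x x (n+1-j)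
        = (-1:ℝ)^j * y^((j+1)*(j+2)) / qPoch x x (n-j)
          + (-1:ℝ)^j * y^((j+1)*(j+2)) * x^(n+1-j) / qPoch x x (n+1-j) := by
      intro j hj
      have hjn : j ≤ n := Nat.lt_succ_iff.mp (Finset.mem_range.mp hj)
      have h1 : n + 1 - j = (n-j)+1 := by omega
      have n1 := hP (n-j); have n2 := hO (n-j)
      rw [h1, qPoch_succ, pow_succ]
      field_simp
      ring
    rw [Finset.sum_congr rfl hterm, Finset.sum_add_distrib]
    show _ + _ + _ = (ss y n) + _
    rw [show ss y n = ∑ j ∈ Finset.range (n+1), (-1:ℝ)^j * y^((j+1)*(j+2)) / qPoch x x (n-j) from rfl]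
    have hl : n + 1 - (n+1) = 0 := by omega
    rw [hl]
    simp [qPoch_zero]
    ring
  have step2 : ∑ j ∈ Finset.range (n+2), (-1:ℝ)^j * y^((j+1)*(j+2)) * x^(n+1-j) / qPoch x x (n+1-j)
      = x^(n+2) * (1 / qPoch x x (n+1)) - x^(n+2) * ss y n := by
    rw [Finset.sum_range_succ']
    have hterm : ∀ i ∈ Finset.range (n+1),
        (-1:ℝ)^(i+1) * y^((i+1+1)*(i+1+2)) * x^(n+1-(i+1)) / qPoch x x (n+1-(i+1))
        = -(x^(n+2)) * ((-1:ℝ)^i * y^((i+1)*(i+2)) / qPoch x x (n-i)) := by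
      intro i hi
      have hin : i ≤ n := Nat.lt_succ_iff.mp (Finset.mem_range.mp hi)
      have h1 : n + 1 - (i+1) = n - i := by omega
      have hyx : y^((i+1+1)*(i+1+2)) = y^((i+1)*(i+2)) * x^(i+2) := by
        rw [hxdef, ← pow_two, ← pow_mul, ← pow_add]
        congr 1; ring
      have hxx : x^(i+2) * x^(n-i) = x^(n+2) := by
        rw [← pow_add]; congr 1; omega
      rw [h1, hyx, ← hxx]
      have n1 := hP (n-i)
      field_simp
      ring
    rw [Finset.sum_congr rfl hterm, ← Finset.mul_sum]
    rw [show (∑ i ∈ Finset.range (n+1), (-1:ℝ)^i * y^((i+1)*(i+2)) / qPoch x x (n-i)) = ss y n from rfl]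
    norm_num
    ring
  rw [step1, step2]
  ring

lemma rs_rel (n : ℕ) :
    rr y (n+1) + ss y n = 1 / qPoch (y*y) (y*y) (n+1) := by
  set x := y*y with hxdef
  have step : rr y (n+1) = 1 / qPoch x x (n+1) - ss y n := by
    show (∑ j ∈ Finset.range (n+2), (-1:ℝ)^j * y^(j*(j+1)) / qPoch x x (n+1-j)) = _
    rw [Finset.sum_range_succ']
    have hterm : ∀ i ∈ Finset.range (n+1),
        (-1:ℝ)^(i+1) * y^((i+1)*(i+1+1)) / qPoch x x (n+1-(i+1))
        = -((-1:ℝ)^i * y^((i+1)*(i+2)) / qPoch x x (n-i)) := by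
      intro i hi
      have h1 : n + 1 - (i+1) = n - i := by omega
      have h2 : (i+1)*(i+1+1) = (i+1)*(i+2) := by ring
      rw [h1, h2, pow_succ]
      ring
    rw [Finset.sum_congr rfl hterm, Finset.sum_neg_distrib]
    rw [show (∑ i ∈ Finset.range (n+1), (-1:ℝ)^i * y^((i+1)*(i+2)) / qPoch x x (n-i)) = ss y n from rfl]
    norm_num
    ring
  linarith [step]

lemma idA (n : ℕ) : qPoch (y*y) (y*y) n * ll y n = rr y n := by
  set x := y*y with hxdef
  have hx0 : 0 < x := hx0' hy0
  have hx1 : x < 1 := hx1' hy0 hy1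
  have hP := qPoch_ne hx0 hx1
  induction n with
  | zero =>
    simp [ll, rr, qPoch_zero]
  | succ n ih =>
    rw [ll_rec hy0 hy1 n, rr_rec hy0 hy1 n]
    have n1 := hP n
    have n2 := hP (n+1)
    have hq : qPoch x x (n+1) = qPoch x x n * (1 - x*x^n) := qPoch_succ x x n
    rw [hq] at n2 ⊢
    rw [← ih]
    have n3 : 1 - x ^ n * x ≠ 0 := by rw [mul_comm]; exact one_sub_ne hx0 hx1 n
    have n4 : 1 - x * x ^ n ≠ 0 := one_sub_ne hx0 hx1 n
    field_simp
    rw [hxdef]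
    ring

lemma idB (n : ℕ) :
    (1 - y*y) * (qPoch (y*y) (y*y) n * ll2 y n) = rr y n - ss y n := by
  set x := y*y with hxdef
  have hx0 : 0 < x := hx0' hy0
  have hx1 : x < 1 := hx1' hy0 hy1
  have hP := qPoch_ne hx0 hx1
  induction n with
  | zero =>
    simp [ll2, rr, ss, qPoch_zero]
    ring
  | succ n ih =>
    have hrr := rr_rec hy0 hy1 n
    have hss := ss_rec hy0 hy1 n
    have hrs := rs_rel hy0 hy1 n
    have hA1 := idA hy0 hy1 (n+1)
    have hE : 1 / qPoch x x (n+1) = rr y (n+1) + ss y n := hrs.symm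
    rw [hE] at hrr hss
    rw [← hxdef] at hrr hss hA1
    rw [qPoch_succ x x n] at hA1
    rw [ll2_rec hy0 hy1 n, qPoch_succ x x n]
    rw [← hxdef]
    linear_combination (1 - x*x^n) * ih + (1-x) * x^(n+1) * hA1 - hrr + hss

end recs2

lemma qPoch_split (x : ℝ) {j n : ℕ} (h : j ≤ n) :
    qPoch x x j * qPoch (x^(j+1)) x (n-j) = qPoch x x n := by
  obtain ⟨d, rfl⟩ : ∃ d, n = j + d := ⟨n - j, by omega⟩
  rw [show j + d - j = d by omega]
  unfold qPoch
  rw [Finset.prod_range_add]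
  congr 1
  refine Finset.prod_congr rfl fun i _ => ?_
  rw [← pow_add, ← pow_succ']
  congr 2
  omega

theorem anzanello_a2_plus_b2_sum (q : ℝ) (hq : 1 < q) (m : ℕ) (hm : 1 ≤ m) :
    ∑ k ∈ Finset.Icc 1 m,
      ((1 - q) * q ^ (-(2 * (k : ℤ) ^ 2) - k) / qPoch (q ^ (-2 : ℤ)) (q ^ (-2 : ℤ)) (k - 1)
          * (qPoch (q ^ (-(2 * (k : ℤ)))) (q ^ (-2 : ℤ)) (m - k)
              / qPoch (q ^ (-2 : ℤ)) (q ^ (-2 : ℤ)) (m - k))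
          * q ^ (-(m : ℤ) + k)
        + q ^ (-(2 * (k : ℤ) ^ 2) + k) / qPoch (q ^ (-2 : ℤ)) (q ^ (-2 : ℤ)) (k - 1)
          * (qPoch (q ^ (-(2 * (k : ℤ)))) (q ^ (-2 : ℤ)) (m - k)
              / qPoch (q ^ (-2 : ℤ)) (q ^ (-2 : ℤ)) (m - k))
          * q ^ (-(m : ℤ) + k))
    = q ^ (-(m : ℤ)) / (1 + q) * ∑ i ∈ Finset.Icc 1 m,
        (-1 : ℝ) ^ (i - 1) * q ^ (-(i : ℤ) * (i + 1)) * (q ^ (2 * i + 1) + 1)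
          / qPoch (q ^ (-2 : ℤ)) (q ^ (-2 : ℤ)) (m - i) := by
  have hq0 : (0:ℝ) < q := lt_trans one_pos hq
  have hqne : q ≠ 0 := ne_of_gt hq0
  obtain ⟨y, hydef⟩ : ∃ y : ℝ, y = q⁻¹ := ⟨q⁻¹, rfl⟩
  have hy0 : 0 < y := by rw [hydef]; positivity
  have hy1 : y < 1 := by
    rw [hydef]
    exact inv_lt_one_of_one_lt₀ hq
  have hqy : q * y = 1 := by rw [hydef]; field_simp
  have hxq : (q ^ (-2 : ℤ) : ℝ) = y * y := by
    rw [hydef, show (-2:ℤ) = -1 + -1 by norm_num, zpow_add₀ hqne, zpow_neg_one]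
  have hx0 : 0 < y*y := hx0' hy0
  have hx1 : y*y < 1 := hx1' hy0 hy1
  have hP := qPoch_ne hx0 hx1
  have hye : ∀ e : ℕ, y ^ e = q ^ (-(e:ℤ)) := by
    intro e
    rw [hydef, ← zpow_natCast q⁻¹ e, ← zpow_neg_one, ← zpow_mul]
    congr 1; ring
  have hxe : ∀ e : ℕ, (y*y) ^ e = q ^ ((-2:ℤ)*e) := by
    intro e
    rw [← hxq, ← zpow_natCast (q ^ (-2:ℤ)) e, ← zpow_mul]
  obtain ⟨n, rfl⟩ : ∃ n, m = n + 1 := ⟨m - 1, by omega⟩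
  rw [← Finset.Ico_add_one_right_eq_Icc, Finset.sum_Ico_eq_sum_range,
    show n + 1 + 1 - 1 = n + 1 by omega]
  rw [Finset.sum_Ico_eq_sum_range, show n + 1 + 1 - 1 = n + 1 by omega]
  -- Left-hand side, termwise
  have hL : ∀ j ∈ Finset.range (n+1),
      ((1 - q) * q ^ (-(2 * ((1+j : ℕ) : ℤ) ^ 2) - ((1+j : ℕ) : ℤ))
            / qPoch (q ^ (-2 : ℤ)) (q ^ (-2 : ℤ)) ((1+j) - 1)
          * (qPoch (q ^ (-(2 * ((1+j : ℕ) : ℤ)))) (q ^ (-2 : ℤ)) ((n+1) - (1+j))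
              / qPoch (q ^ (-2 : ℤ)) (q ^ (-2 : ℤ)) ((n+1) - (1+j)))
          * q ^ (-((n+1 : ℕ) : ℤ) + ((1+j : ℕ) : ℤ))
        + q ^ (-(2 * ((1+j : ℕ) : ℤ) ^ 2) + ((1+j : ℕ) : ℤ))
            / qPoch (q ^ (-2 : ℤ)) (q ^ (-2 : ℤ)) ((1+j) - 1)
          * (qPoch (q ^ (-(2 * ((1+j : ℕ) : ℤ)))) (q ^ (-2 : ℤ)) ((n+1) - (1+j))
              / qPoch (q ^ (-2 : ℤ)) (q ^ (-2 : ℤ)) ((n+1) - (1+j)))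
          * q ^ (-((n+1 : ℕ) : ℤ) + ((1+j : ℕ) : ℤ)))
      = q ^ (-((n+1 : ℕ) : ℤ)) *
          (((y*y)^(j*j+j) + (1-q) * (y*y)^(j*j+2*j+1)) *
            (qPoch (y*y) (y*y) n /
              (qPoch (y*y) (y*y) j * qPoch (y*y) (y*y) j * qPoch (y*y) (y*y) (n-j)))) := by
    intro j hj
    have hjn : j ≤ n := Nat.lt_succ_iff.mp (Finset.mem_range.mp hj)
    have e1 : (1+j) - 1 = j := by omega
    have e2 : (n+1) - (1+j) = n - j := by omega
    have hbase : q ^ (-(2 * ((1+j : ℕ) : ℤ))) = (y*y)^(1+j) := by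
      rw [hxe (1+j)]; congr 1 <;> (push_cast; ring)
    have key_a : q ^ (-(2 * ((1+j : ℕ) : ℤ) ^ 2) - ((1+j : ℕ) : ℤ))
        * q ^ (-((n+1 : ℕ) : ℤ) + ((1+j : ℕ) : ℤ))
        = q ^ (-((n+1 : ℕ) : ℤ)) * (y*y)^(j*j+2*j+1) := by
      rw [hxe (j*j+2*j+1), ← zpow_add₀ hqne, ← zpow_add₀ hqne]
      congr 1 <;> (push_cast; ring)
    have key_b : q ^ (-(2 * ((1+j : ℕ) : ℤ) ^ 2) + ((1+j : ℕ) : ℤ))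
        * q ^ (-((n+1 : ℕ) : ℤ) + ((1+j : ℕ) : ℤ))
        = q ^ (-((n+1 : ℕ) : ℤ)) * (y*y)^(j*j+j) := by
      rw [hxe (j*j+j), ← zpow_add₀ hqne, ← zpow_add₀ hqne]
      congr 1 <;> (push_cast; ring)
    rw [e1, e2, hxq, hbase]
    rw [show (1+j) = j+1 by omega]
    have hsplit : qPoch ((y*y)^(j+1)) (y*y) (n-j)
        = qPoch (y*y) (y*y) n / qPoch (y*y) (y*y) j := by
      rw [eq_div_iff (hP j)]
      linear_combination qPoch_split (y*y) hjn
    rw [hsplit]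
    have hja : ((1:ℕ)+j : ℤ) = ((j:ℤ)+1) := by push_cast; ring
    calc (1 - q) * q ^ (-(2 * ((j+1 : ℕ) : ℤ) ^ 2) - ((j+1 : ℕ) : ℤ))
            / qPoch (y*y) (y*y) j
          * (qPoch (y*y) (y*y) n / qPoch (y*y) (y*y) j / qPoch (y*y) (y*y) (n-j))
          * q ^ (-((n+1 : ℕ) : ℤ) + ((j+1 : ℕ) : ℤ))
        + q ^ (-(2 * ((j+1 : ℕ) : ℤ) ^ 2) + ((j+1 : ℕ) : ℤ)) / qPoch (y*y) (y*y) j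
          * (qPoch (y*y) (y*y) n / qPoch (y*y) (y*y) j / qPoch (y*y) (y*y) (n-j))
          * q ^ (-((n+1 : ℕ) : ℤ) + ((j+1 : ℕ) : ℤ))
        = ((1-q) * (q ^ (-(2 * ((j+1 : ℕ) : ℤ) ^ 2) - ((j+1 : ℕ) : ℤ))
              * q ^ (-((n+1 : ℕ) : ℤ) + ((j+1 : ℕ) : ℤ)))
            + q ^ (-(2 * ((j+1 : ℕ) : ℤ) ^ 2) + ((j+1 : ℕ) : ℤ))
              * q ^ (-((n+1 : ℕ) : ℤ) + ((j+1 : ℕ) : ℤ)))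
          * (qPoch (y*y) (y*y) n / qPoch (y*y) (y*y) j / qPoch (y*y) (y*y) j
              / qPoch (y*y) (y*y) (n-j)) := by ring
      _ = _ := by
          rw [show ((j+1:ℕ) : ℤ) = ((1+j:ℕ) : ℤ) by push_cast; ring]
          rw [key_a, key_b]
          field_simp
          ring
  rw [Finset.sum_congr rfl hL]
  -- Right-hand side, termwise
  have hR : ∀ j ∈ Finset.range (n+1),
      ((-1 : ℝ) ^ ((1+j) - 1) * q ^ (-((1+j : ℕ) : ℤ) * (((1+j : ℕ) : ℤ) + 1))
          * (q ^ (2 * (1+j) + 1) + 1) / qPoch (q ^ (-2 : ℤ)) (q ^ (-2 : ℤ)) ((n+1) - (1+j)))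
      = q * ((-1:ℝ)^j * y^(j*(j+1)) / qPoch (y*y) (y*y) (n-j))
        + (-1:ℝ)^j * y^((j+1)*(j+2)) / qPoch (y*y) (y*y) (n-j) := by
    intro j hj
    have hjn : j ≤ n := Nat.lt_succ_iff.mp (Finset.mem_range.mp hj)
    have e1 : (1+j) - 1 = j := by omega
    have e2 : (n+1) - (1+j) = n - j := by omega
    have key_c : q ^ (-((1+j : ℕ) : ℤ) * (((1+j : ℕ) : ℤ) + 1)) * (q ^ (2 * (1+j) + 1) + 1)
        = q * y^(j*(j+1)) + y^((j+1)*(j+2)) := by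
      rw [mul_add, mul_one, hye (j*(j+1)), hye ((j+1)*(j+2))]
      rw [← zpow_natCast q (2*(1+j)+1), ← zpow_add₀ hqne]
      rw [show (q : ℝ) * q ^ (-((j*(j+1) : ℕ) : ℤ)) = q^(1 + -((j*(j+1) : ℕ) : ℤ)) by
        rw [zpow_add₀ hqne, zpow_one]]
      congr 1
      · congr 1 <;> (push_cast; ring)
      · congr 1 <;> (push_cast; ring)
    rw [e1, e2, hxq]
    linear_combination ((-1:ℝ)^j / qPoch (y*y) (y*y) (n-j)) * key_c
  rw [Finset.sum_congr rfl hR]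
  -- assemble
  have hSL : ∑ j ∈ Finset.range (n+1),
      q ^ (-((n+1 : ℕ) : ℤ)) *
          (((y*y)^(j*j+j) + (1-q) * (y*y)^(j*j+2*j+1)) *
            (qPoch (y*y) (y*y) n /
              (qPoch (y*y) (y*y) j * qPoch (y*y) (y*y) j * qPoch (y*y) (y*y) (n-j))))
      = q ^ (-((n+1 : ℕ) : ℤ)) *
          (qPoch (y*y) (y*y) n * ll y n + (1-q) * (y*y) * (qPoch (y*y) (y*y) n * ll2 y n)) := by
    rw [← Finset.mul_sum]
    congr 1
    simp only [ll, ll2]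
    rw [Finset.mul_sum, Finset.mul_sum, Finset.mul_sum, ← Finset.sum_add_distrib]
    refine Finset.sum_congr rfl fun j _ => ?_
    rw [pow_succ (y*y) (j*j+2*j)]
    ring
  rw [hSL]
  have hSR : ∑ j ∈ Finset.range (n+1),
      (q * ((-1:ℝ)^j * y^(j*(j+1)) / qPoch (y*y) (y*y) (n-j))
        + (-1:ℝ)^j * y^((j+1)*(j+2)) / qPoch (y*y) (y*y) (n-j))
      = q * rr y n + ss y n := by
    rw [Finset.sum_add_distrib, ← Finset.mul_sum]
    rfl
  rw [hSR]
  have h1q : (1:ℝ) + q ≠ 0 := by linarith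
  have hA := idA hy0 hy1 n
  have hB := idB hy0 hy1 n
  have hmaster : qPoch (y*y) (y*y) n * ll y n + (1-q) * (y*y) * (qPoch (y*y) (y*y) n * ll2 y n)
      = (q * rr y n + ss y n) / (1 + q) := by
    rw [eq_div_iff h1q]
    linear_combination (1+q) * hA - hB
      - (qPoch (y*y) (y*y) n * ll2 y n) * (q*y + 1) * hqy
  rw [hmaster]
  ring
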